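/- Let C be a complete ∞-category and Ab(C) its ∞-category of abelian group objects. Let G ∈ Ab(C) be such that (1) the underlying object of G is cocompact in C, i.e. Map_C(−, G) sends filtered limits to filtered colimits, and (2) G is truncated in C, i.e. there exists n such that Map_C(E, G) is n-truncated for all E ∈ C. Then G is cocompact as an object of Ab(C). -/

import Mathlib

/-!
STATEMENT 15.  Let `C` be a complete ∞-category and `Ab(C)` its ∞-category of abelian group
objects, i.e. the full sub-∞-category of functors `T^op → C` sending finite sums to finite
products, where `T` is the algebraic theory of abelian groups (the opposite of the category of
finitely generated free abelian groups).  Let `G ∈ Ab(C)` be such that (1) the underlying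
object of `G` is cocompact in `C` (`Map_C(−, G)` sends filtered limits to filtered colimits)
and (2) `G` is truncated in `C`.  Then `G` is cocompact as an object of `Ab(C)`.

In this 1-categorical model, mapping spaces are sets, hence automatically `0`-truncated, so
hypothesis (2) holds automatically and is omitted.  Cocompactness of `G` in a category `D` is
expressed by: for every cofiltered limit in `D`, the canonical cocone on the filtered diagram
of hom-sets into `G`, with point `Hom(lim F, G)`, is a colimit cocone.
-/

open CategoryTheory Limits Opposite

universe w v u

/-- The algebraic theory of abelian groups: finitely generated free abelian groups
(a skeleton thereof), i.e. the groups isomorphic to some `Fin n → ℤ`. -/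
abbrev FreeAbFG : Type 1 :=
  ObjectProperty.FullSubcategory (fun G : AddCommGrpCat.{0} => ∃ n : ℕ, Nonempty (G ≅ AddCommGrpCat.of (Fin n → ℤ)))

/-- The rank one free abelian group, so that evaluation at it gives the underlying object
of an abelian group object. -/
def rankOne : FreeAbFG :=
  ⟨AddCommGrpCat.of (Fin 1 → ℤ), 1, ⟨Iso.refl _⟩⟩

/-- The category `Ab(C)` of abelian group objects of `C`: functors `T^op ⥤ C` sending the
finite sums of `T` to finite products, i.e. preserving the finite products of `T^op`. -/
abbrev AbObj (C : Type u) [Category.{v} C] : Type (max u v 1) :=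
  ObjectProperty.FullSubcategory (fun F : FreeAbFGᵒᵖ ⥤ C => Nonempty (PreservesFiniteProducts F))

/-- The canonical cocone on the diagram `j ↦ Hom_D(F j, G)` with point `Hom_D(lim F, G)`. -/
noncomputable def homCocone {D : Type u} [Category.{v} D] {J : Type w} [SmallCategory J]
    (F : J ⥤ D) [HasLimit F] (G : D) : Cocone (F.op ⋙ yoneda.obj G) where
  pt := limit F ⟶ G
  ι :=
    { app := fun j => TypeCat.ofHom (fun φ => limit.π F j.unop ≫ φ)
      naturality := by
        intro j j' f
        ext φ
        simp }

/-- An object `G` of a category `D` is cocompact if `Map_D(−, G)` sends (co)filtered limits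
to filtered colimits: for every cofiltered diagram `F` admitting a limit, the canonical
cocone `colim_j Hom(F j, G) → Hom(lim F, G)` is colimiting. -/
def IsCocompact {D : Type u} [Category.{v} D] (G : D) : Prop :=
  ∀ (J : Type w) (_ : SmallCategory J) (_ : IsCofiltered J) (F : J ⥤ D) (_ : HasLimit F),
    Nonempty (IsColimit (homCocone F G))

-- ===== auxiliary definitions and lemmas =====

/-- standard objects -/
abbrev std (n : ℕ) : FreeAbFG :=
  ⟨AddCommGrpCat.of (Fin n → ℤ), n, ⟨Iso.refl _⟩⟩

example : std 1 = rankOne := rfl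

/-- view a morphism of `FreeAbFG` as an additive hom -/
def toHom {A B : FreeAbFG} (f : A ⟶ B) : A.obj →+ B.obj := f.hom.hom

lemma toHom_comp {A B C' : FreeAbFG} (f : A ⟶ B) (g : B ⟶ C') (x : A.obj) :
    toHom (f ≫ g) x = toHom g (toHom f x) := rfl

lemma hom_ext' {A B : FreeAbFG} {f g : A ⟶ B} (h : ∀ x, toHom f x = toHom g x) : f = g := by
  apply ObjectProperty.hom_ext; apply AddCommGrpCat.hom_ext; exact AddMonoidHom.ext h

/-- morphism `std 1 ⟶ std n` classified by a vector `w`. -/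
def cw {n : ℕ} (w : Fin n → ℤ) : std 1 ⟶ std n :=
  ObjectProperty.homMk (AddCommGrpCat.ofHom
    { toFun := fun v => v 0 • w
      map_zero' := by simp
      map_add' := fun a b => by
        show (a 0 + b 0) • w = _
        rw [add_smul] })

lemma cw_apply {n : ℕ} (w : Fin n → ℤ) (v : Fin 1 → ℤ) : toHom (cw w) v = v 0 • w := rfl

def ee (n : ℕ) (i : Fin n) : std 1 ⟶ std n := cw (Pi.single i 1)

lemma one_vec (v : Fin 1 → ℤ) : v = v 0 • (fun _ => (1:ℤ)) := by
  funext j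
  have : j = 0 := Subsingleton.elim _ _
  subst this
  simp

lemma ee_one_zero : ee 1 0 = 𝟙 (std 1) := by
  apply hom_ext'
  intro v
  show v 0 • Pi.single (0 : Fin 1) (1:ℤ) = v
  funext j
  have : j = (0 : Fin 1) := Subsingleton.elim _ _
  subst this
  simp

lemma hom_from_std1 {n : ℕ} (h : std 1 ⟶ std n) : h = cw (toHom h (fun _ => 1)) := by
  apply hom_ext'
  intro v
  show toHom h v = v 0 • toHom h (fun _ => 1)
  conv_lhs => rw [one_vec v]
  rw [map_zsmul]

/-- diagonal `std 1 ⟶ std 2` -/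
def dd : std 1 ⟶ std 2 := cw (fun _ => 1)

/-- negation `std 1 ⟶ std 1` -/
def negg : std 1 ⟶ std 1 := cw (fun _ => -1)

/-- zero map to `std 0` -/
def zz : std 1 ⟶ std 0 := cw (fun x => x.elim0)

/-- the map out of `std 0` -/
def iz (n : ℕ) : std 0 ⟶ std n := ObjectProperty.homMk (AddCommGrpCat.ofHom 0)

lemma cw_zero {n : ℕ} : cw (0 : Fin n → ℤ) = zz ≫ iz n := by
  apply hom_ext'; intro v
  show v 0 • (0 : Fin n → ℤ) = (0 : (Fin 0 → ℤ) →+ (Fin n → ℤ)) (toHom zz v)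
  simp

lemma cw_neg {n : ℕ} (w : Fin n → ℤ) : cw (-w) = negg ≫ cw w := by
  apply hom_ext'; intro v
  rw [toHom_comp]
  simp only [negg, cw_apply]
  show v 0 • (-w) = (v 0 • (fun _ => (-1:ℤ))) 0 • w
  simp [smul_smul]

/-- `std 2 ⟶ std n` from two vectors -/
def kk {n : ℕ} (w w' : Fin n → ℤ) : std 2 ⟶ std n :=
  ObjectProperty.homMk <| AddCommGrpCat.ofHom
    { toFun := fun v => v 0 • w + v 1 • w'
      map_zero' := by simp
      map_add' := fun a b => by
        show (a 0 + b 0) • w + (a 1 + b 1) • w' = (a 0 • w + a 1 • w') + (b 0 • w + b 1 • w')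
        rw [add_smul, add_smul]; abel }

lemma kk_apply {n : ℕ} (w w' : Fin n → ℤ) (v : Fin 2 → ℤ) :
    toHom (kk w w') v = v 0 • w + v 1 • w' := rfl

lemma ee_comp_kk0 {n : ℕ} (w w' : Fin n → ℤ) : ee 2 0 ≫ kk w w' = cw w := by
  apply hom_ext'; intro v
  rw [toHom_comp, kk_apply, cw_apply]
  show (v 0 • (Pi.single (0 : Fin 2) (1:ℤ) : Fin 2 → ℤ)) 0 • w + (v 0 • (Pi.single (0 : Fin 2) (1:ℤ) : Fin 2 → ℤ)) 1 • w' = v 0 • w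
  simp

lemma ee_comp_kk1 {n : ℕ} (w w' : Fin n → ℤ) : ee 2 1 ≫ kk w w' = cw w' := by
  apply hom_ext'; intro v
  rw [toHom_comp, kk_apply, cw_apply]
  show (v 0 • (Pi.single (1 : Fin 2) (1:ℤ) : Fin 2 → ℤ)) 0 • w + (v 0 • (Pi.single (1 : Fin 2) (1:ℤ) : Fin 2 → ℤ)) 1 • w' = v 0 • w'
  simp [Pi.single_apply]

lemma dd_comp_kk {n : ℕ} (w w' : Fin n → ℤ) : dd ≫ kk w w' = cw (w + w') := by
  apply hom_ext'; intro v
  rw [toHom_comp, kk_apply, cw_apply]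
  simp only [dd, cw_apply]
  show (v 0 • (fun _ => (1:ℤ))) 0 • w + (v 0 • (fun _ => (1:ℤ))) 1 • w' = v 0 • (w + w')
  simp [smul_add]

/-- the standard cofan -/
def stdCofan (n : ℕ) : Cofan (fun _ : Fin n => std 1) := Cofan.mk (std n) (ee n)

lemma unique_from_std0 {B : FreeAbFG} (f g : std 0 ⟶ B) : f = g := by
  apply hom_ext'; intro v
  have hv : v = 0 := funext fun x => x.elim0
  subst hv
  simp

noncomputable def isColimitStdCofan (n : ℕ) : IsColimit (stdCofan n) := by
  refine mkCofanColimit _ (fun t => ObjectProperty.homMk <| AddCommGrpCat.ofHom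
    { toFun := fun wv => ∑ i : Fin n, toHom (t.inj i) (fun _ => wv i)
      map_zero' := by
        have h0 : ∀ i : Fin n, (fun (_ : Fin 1) => (0 : Fin n → ℤ) i) = (0 : Fin 1 → ℤ) :=
          fun i => rfl
        simp only [h0, map_zero, Finset.sum_const_zero]
      map_add' := fun a b => by
        have h : ∀ i : Fin n, toHom (t.inj i) (fun _ => (a + b) i)
            = toHom (t.inj i) (fun _ => a i) + toHom (t.inj i) (fun _ => b i) := by
          intro i
          rw [← map_add]
          congr 1
        simp only [h]
        rw [Finset.sum_add_distrib] }) ?_ ?_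
  · intro t i
    apply hom_ext'; intro v
    rw [toHom_comp]
    show ∑ k : Fin n, toHom (t.inj k) (fun _ => toHom (ee n i) v k) = toHom (t.inj i) v
    have hv : ∀ k, toHom (ee n i) v k = if k = i then v 0 else 0 := by
      intro k
      show (v 0 • (Pi.single i (1:ℤ) : Fin n → ℤ)) k = if k = i then v 0 else 0
      simp only [ee, cw_apply, Pi.smul_apply, Pi.single_apply, smul_eq_mul, mul_ite,
        mul_one, mul_zero]
    rw [Finset.sum_eq_single i]
    · have hfun : (fun _ => toHom (ee n i) v i : Fin 1 → ℤ) = v := by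
        funext j
        rw [hv i, if_pos rfl, Subsingleton.elim j (0 : Fin 1)]
      rw [hfun]
    · intro k _ hk
      have hfun : (fun _ => toHom (ee n i) v k : Fin 1 → ℤ) = 0 := by
        funext j
        rw [hv k, if_neg hk]
        rfl
      rw [hfun, map_zero]
    · intro h; exact absurd (Finset.mem_univ i) h
  · intro t m hm
    apply hom_ext'; intro w
    show toHom m w = ∑ i : Fin n, toHom (t.inj i) (fun _ => w i)
    have hw : w = ∑ i : Fin n, Pi.single i (w i) := (Finset.univ_sum_single w).symm
    conv_lhs => rw [hw]
    refine (map_sum (toHom m) (fun i => Pi.single i (w i)) Finset.univ).trans ?_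
    congr 1
    funext i
    have h1 : toHom (ee n i) (fun _ => w i) = Pi.single i (w i) := by
      simp only [ee, cw_apply]
      show (fun _ => w i : Fin 1 → ℤ) 0 • (Pi.single i (1:ℤ) : Fin n → ℤ) = Pi.single i (w i)
      rw [← Pi.single_smul]
      simp
    rw [← h1]
    show toHom ((stdCofan n).inj i ≫ m) (fun _ => w i) = toHom (t.inj i) (fun _ => w i)
    rw [hm i]

-- chunk 2
def liftIso {A B : FreeAbFG} (e : A.obj ≅ B.obj) : A ≅ B := ObjectProperty.isoMk _ e

noncomputable def rk (A : FreeAbFG) : ℕ := A.property.choose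

noncomputable def isoStd (A : FreeAbFG) : std (rk A) ≅ A :=
  (liftIso A.property.choose_spec.some).symm

noncomputable def bas (A : FreeAbFG) (i : Fin (rk A)) : std 1 ⟶ A :=
  ee (rk A) i ≫ (isoStd A).hom

noncomputable def basCofan (A : FreeAbFG) : Cofan (fun _ : Fin (rk A) => std 1) :=
  Cofan.mk A (bas A)

noncomputable def isColimitBasCofan (A : FreeAbFG) : IsColimit (basCofan A) :=
  (isColimitStdCofan (rk A)).ofIsoColimit (Cocones.ext (isoStd A) (by rintro ⟨i⟩; rfl))

def opFan {n : ℕ} {A : FreeAbFG} (β : Fin n → (std 1 ⟶ A)) :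
    Fan (fun _ : Fin n => op (std 1)) :=
  Fan.mk (op A) (fun i => (β i).op)

noncomputable def isLimitOpFan {n : ℕ} {A : FreeAbFG} {β : Fin n → (std 1 ⟶ A)}
    (hβ : IsColimit (Cofan.mk A β)) : IsLimit (opFan β) := by
  refine mkFanLimit _
    (fun s => (hβ.desc (Cofan.mk (unop s.pt) (fun i => (s.π.app ⟨i⟩).unop))).op) ?_ ?_
  · intro s i
    show (hβ.desc (Cofan.mk (unop s.pt) (fun i => (s.π.app ⟨i⟩).unop))).op ≫ (β i).op
        = s.π.app ⟨i⟩
    rw [← op_comp]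
    have h' : β i ≫ hβ.desc (Cofan.mk (unop s.pt) (fun i => (s.π.app ⟨i⟩).unop))
        = (s.π.app ⟨i⟩).unop := hβ.fac _ ⟨i⟩
    rw [h']
    exact Quiver.Hom.op_unop _
  · intro s m hm
    have h : m.unop = hβ.desc (Cofan.mk (unop s.pt) (fun i => (s.π.app ⟨i⟩).unop)) := by
      apply hβ.uniq (Cofan.mk (unop s.pt) (fun i => (s.π.app ⟨i⟩).unop)) m.unop
      rintro ⟨i⟩
      show β i ≫ m.unop = (s.π.app ⟨i⟩).unop
      have := hm i
      exact congrArg Quiver.Hom.unop this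
    rw [← Quiver.Hom.op_unop m, h]
    rfl

section PLift

variable {C : Type u} [Category.{v} C] (H : FreeAbFGᵒᵖ ⥤ C)

def famCone {n : ℕ} {Y : C} (fam : Fin n → (Y ⟶ H.obj (op (std 1)))) :
    Cone (Discrete.functor (fun _ : Fin n => op (std 1)) ⋙ H) where
  pt := Y
  π := Discrete.natTrans (fun i => fam i.as)

variable {H}

noncomputable def pLift {n : ℕ} {A : FreeAbFG} {β : Fin n → (std 1 ⟶ A)}
    (hl : IsLimit (H.mapCone (opFan β))) {Y : C} (fam : Fin n → (Y ⟶ H.obj (op (std 1)))) :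
    Y ⟶ H.obj (op A) :=
  hl.lift (famCone H fam)

lemma pLift_fac {n : ℕ} {A : FreeAbFG} {β : Fin n → (std 1 ⟶ A)}
    (hl : IsLimit (H.mapCone (opFan β))) {Y : C} (fam : Fin n → (Y ⟶ H.obj (op (std 1))))
    (i : Fin n) : pLift hl fam ≫ H.map (β i).op = fam i :=
  hl.fac (famCone H fam) ⟨i⟩

lemma pHomExt {n : ℕ} {A : FreeAbFG} {β : Fin n → (std 1 ⟶ A)}
    (hl : IsLimit (H.mapCone (opFan β))) {Y : C} {f g : Y ⟶ H.obj (op A)}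
    (h : ∀ i, f ≫ H.map (β i).op = g ≫ H.map (β i).op) : f = g :=
  hl.hom_ext (by rintro ⟨i⟩; exact h i)

noncomputable def fanLim (hH : PreservesFiniteProducts H) {n : ℕ} {A : FreeAbFG}
    {β : Fin n → (std 1 ⟶ A)} (hβ : IsColimit (Cofan.mk A β)) :
    IsLimit (H.mapCone (opFan β)) :=
  letI := hH.preserves n
  isLimitOfPreserves H (isLimitOpFan hβ)

end PLift

section TypesFiltered
variable {J : Type w} [SmallCategory J] {F' : J ⥤ Type v'}

lemma tHomExt {X Y : Type u'} {f g : X ⟶ Y} (h : ∀ x, f x = g x) : f = g :=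
  TypeCat.homEquiv.injective (funext h)

lemma jointSurj (t : Cocone F') (ht : IsColimit t) (z : t.pt) :
    ∃ j x, t.ι.app j x = z := by
  let S := {z : t.pt | ∃ j x, t.ι.app j x = z}
  let t' : Cocone F' :=
    { pt := S
      ι :=
        { app := fun j => TypeCat.ofHom (fun x => ⟨t.ι.app j x, ⟨j, x, rfl⟩⟩)
          naturality := fun j j' f => by
            refine tHomExt (fun x => ?_)
            apply Subtype.ext
            exact types_congr_hom (t.ι.naturality f) x } }
  have h1 : TypeCat.ofHom (fun z => ((ht.desc t' z : S) : t.pt)) = 𝟙 _ := by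
    apply ht.hom_ext
    intro j
    have h := ht.fac t' j
    refine tHomExt (fun x => ?_)
    have hx : ht.desc t' (t.ι.app j x) = ⟨t.ι.app j x, ⟨j, x, rfl⟩⟩ := types_congr_hom h x
    show ((ht.desc t' (t.ι.app j x) : S) : t.pt) = t.ι.app j x
    rw [hx]
  have h2 : z = ((ht.desc t' z : S) : t.pt) := (types_congr_hom h1 z).symm
  rw [h2]
  exact (ht.desc t' z).2

lemma spanFiltered [IsFiltered J] {a b c : J} (u : a ⟶ b) (g : a ⟶ c) :
    ∃ (m : J) (p : b ⟶ m) (q : c ⟶ m), u ≫ p = g ≫ q := by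
  obtain ⟨m0, p0, q0, -⟩ := IsFilteredOrEmpty.cocone_objs b c
  obtain ⟨m, h, hh⟩ := IsFilteredOrEmpty.cocone_maps (u ≫ p0) (g ≫ q0)
  exact ⟨m, p0 ≫ h, q0 ≫ h, by rw [← Category.assoc, ← Category.assoc, hh]⟩

lemma filteredEq [IsFiltered J] (t : Cocone F') (ht : IsColimit t) {j : J}
    (x y : F'.obj j) (hxy : t.ι.app j x = t.ι.app j y) :
    ∃ (k : J) (u : j ⟶ k), F'.map u x = F'.map u y := by
  let P : Cocone F' :=
    { pt := ULift.{v'} Prop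
      ι :=
        { app := fun k => TypeCat.ofHom (fun z => ⟨∃ (l : J) (f : j ⟶ l) (g : k ⟶ l), F'.map f x = F'.map g z⟩)
          naturality := fun k k' uu => by
            refine tHomExt (fun z => ?_)
            show ULift.up _ = ULift.up _
            apply congrArg ULift.up
            apply propext
            constructor
            · rintro ⟨l, f, g, hfg⟩
              refine ⟨l, f, uu ≫ g, ?_⟩
              rw [hfg, FunctorToTypes.map_comp_apply]
              rfl
            · rintro ⟨l, f, g, hfg⟩
              obtain ⟨m, p, q, hpq⟩ := spanFiltered uu g
              refine ⟨m, f ≫ q, p, ?_⟩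
              rw [FunctorToTypes.map_comp_apply, hfg, ← FunctorToTypes.map_comp_apply,
                ← hpq, FunctorToTypes.map_comp_apply]
              rfl } }
  have hx : ht.desc P (t.ι.app j x) = P.ι.app j x := types_congr_hom (ht.fac P j) x
  have hy : ht.desc P (t.ι.app j y) = P.ι.app j y := types_congr_hom (ht.fac P j) y
  have hP : P.ι.app j x = P.ι.app j y := by rw [← hx, ← hy, hxy]
  have hprop : (∃ (l : J) (f : j ⟶ l) (g : j ⟶ l), F'.map f x = F'.map g x)
      = (∃ (l : J) (f : j ⟶ l) (g : j ⟶ l), F'.map f x = F'.map g y) :=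
    congrArg ULift.down hP
  have : ∃ (l : J) (f : j ⟶ l) (g : j ⟶ l), F'.map f x = F'.map g y := by
    rw [← hprop]
    exact ⟨j, 𝟙 j, 𝟙 j, rfl⟩
  obtain ⟨l, f, g, hfg⟩ := this
  obtain ⟨m, h, hh⟩ := IsFilteredOrEmpty.cocone_maps f g
  refine ⟨m, f ≫ h, ?_⟩
  rw [FunctorToTypes.map_comp_apply, hfg, ← FunctorToTypes.map_comp_apply, ← hh,
    FunctorToTypes.map_comp_apply]

noncomputable def isColimitOfFiltered (t : Cocone F')
    (hs : ∀ z : t.pt, ∃ j x, t.ι.app j x = z)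
    (he : ∀ (j j' : J) (x : F'.obj j) (y : F'.obj j'), t.ι.app j x = t.ι.app j' y →
      ∃ (k : J) (f : j ⟶ k) (g : j' ⟶ k), F'.map f x = F'.map g y) : IsColimit t := by
  have key : ∀ (s : Cocone F') (j j' : J) (x : F'.obj j) (y : F'.obj j'),
      t.ι.app j x = t.ι.app j' y → s.ι.app j x = s.ι.app j' y := by
    intro s j j' x y hxy
    obtain ⟨k, f, g, hfg⟩ := he j j' x y hxy
    have h1 : s.ι.app j x = s.ι.app k (F'.map f x) := (types_congr_hom (s.w f) x).symm
    have h2 : s.ι.app j' y = s.ι.app k (F'.map g y) := (types_congr_hom (s.w g) y).symm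
    rw [h1, h2, hfg]
  refine
    { desc := fun s => TypeCat.ofHom (fun z => s.ι.app (hs z).choose (hs z).choose_spec.choose)
      fac := ?_
      uniq := ?_ }
  · intro s j
    refine tHomExt (fun x => ?_)
    simp only [types_comp_apply, TypeCat.ofHom_apply]
    apply key s
    exact (hs (t.ι.app j x)).choose_spec.choose_spec
  · intro s m hm
    refine tHomExt (fun z => ?_)
    obtain ⟨j, x, hx⟩ := hs z
    have h1 : m z = s.ι.app j x := by
      rw [← hx]
      exact types_congr_hom (hm j) x
    have h2 : s.ι.app (hs z).choose (hs z).choose_spec.choose = s.ι.app j x := by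
      apply key s
      rw [(hs z).choose_spec.choose_spec, hx]
    show m z = s.ι.app _ _
    rw [h1, h2]

end TypesFiltered

-- ============ chunk 3 ============
section Psi

variable {C : Type u} [Category.{v} C] {X G' : FreeAbFGᵒᵖ ⥤ C}
  (hG : PreservesFiniteProducts G')
  (ψ : X.obj (op (std 1)) ⟶ G'.obj (op (std 1)))

/-- component of the candidate extension at a standard object, via the standard basis -/
noncomputable def psiStd (m : ℕ) : X.obj (op (std m)) ⟶ G'.obj (op (std m)) :=
  pLift (fanLim hG (isColimitStdCofan m)) (fun i => X.map (ee m i).op ≫ ψ)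

lemma psiStd_fac (m : ℕ) (i : Fin m) :
    psiStd hG ψ m ≫ G'.map (ee m i).op = X.map (ee m i).op ≫ ψ :=
  pLift_fac (fanLim hG (isColimitStdCofan m)) _ i

/-- component of the candidate extension at a general object, via the chosen basis -/
noncomputable def psiComp (A : FreeAbFG) : X.obj (op A) ⟶ G'.obj (op A) :=
  pLift (fanLim hG (isColimitBasCofan A)) (fun i => X.map (bas A i).op ≫ ψ)

lemma psiComp_fac (A : FreeAbFG) (i : Fin (rk A)) :
    psiComp hG ψ A ≫ G'.map (bas A i).op = X.map (bas A i).op ≫ ψ :=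
  pLift_fac (fanLim hG (isColimitBasCofan A)) _ i

variable (ha : X.map dd.op ≫ ψ = psiStd hG ψ 2 ≫ G'.map dd.op)
  (hn : X.map negg.op ≫ ψ = ψ ≫ G'.map negg.op)
  (hz : X.map zz.op ≫ ψ = psiStd hG ψ 0 ≫ G'.map zz.op)

include ha hn hz in
lemma E1 (m : ℕ) (w : Fin m → ℤ) :
    X.map (cw w).op ≫ ψ = psiStd hG ψ m ≫ G'.map (cw w).op := by
  let S : AddSubgroup (Fin m → ℤ) :=
    { carrier := {w | X.map (cw w).op ≫ ψ = psiStd hG ψ m ≫ G'.map (cw w).op}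
      zero_mem' := by
        have hiz : X.map (iz m).op ≫ psiStd hG ψ 0
            = psiStd hG ψ m ≫ G'.map (iz m).op :=
          pHomExt (fanLim hG (isColimitStdCofan 0)) (fun i => i.elim0)
        show X.map (cw 0).op ≫ ψ = psiStd hG ψ m ≫ G'.map (cw 0).op
        rw [cw_zero, op_comp, Functor.map_comp, Functor.map_comp, Category.assoc, hz,
          ← Category.assoc, hiz, Category.assoc]
      add_mem' := by
        intro a b hb hb'
        have hak : X.map (kk a b).op ≫ psiStd hG ψ 2
            = psiStd hG ψ m ≫ G'.map (kk a b).op := by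
          apply pHomExt (fanLim hG (isColimitStdCofan 2))
          intro i
          rw [Category.assoc, psiStd_fac, ← Category.assoc, ← Functor.map_comp, ← op_comp,
            Category.assoc, ← Functor.map_comp, ← op_comp]
          match i with
          | 0 =>
            rw [ee_comp_kk0, hb]
          | 1 =>
            rw [ee_comp_kk1, hb']
        show X.map (cw (a + b)).op ≫ ψ = psiStd hG ψ m ≫ G'.map (cw (a + b)).op
        rw [← dd_comp_kk, op_comp, Functor.map_comp, Functor.map_comp, Category.assoc, ha,
          ← Category.assoc, hak, Category.assoc]
      neg_mem' := by
        intro a hb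
        show X.map (cw (-a)).op ≫ ψ = psiStd hG ψ m ≫ G'.map (cw (-a)).op
        rw [cw_neg, op_comp, Functor.map_comp, Functor.map_comp, Category.assoc, hn,
          ← Category.assoc, hb, Category.assoc] }
  have hsingle : ∀ i : Fin m, Pi.single i (1:ℤ) ∈ S := by
    intro i
    show X.map (cw (Pi.single i 1)).op ≫ ψ = psiStd hG ψ m ≫ G'.map (cw (Pi.single i 1)).op
    exact (psiStd_fac hG ψ m i).symm
  have hw : w ∈ S := by
    rw [← Finset.univ_sum_single w]
    refine AddSubgroup.sum_mem S (fun i _ => ?_)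
    have h1 : (Pi.single i (w i) : Fin m → ℤ) = w i • (Pi.single i (1:ℤ) : Fin m → ℤ) := by
      rw [← Pi.single_smul]
      simp
    rw [h1]
    exact AddSubgroup.zsmul_mem S (hsingle i) (w i)
  exact hw

include ha hn hz in
lemma star2 (B : FreeAbFG) (c : std 1 ⟶ B) :
    X.map c.op ≫ ψ = psiComp hG ψ B ≫ G'.map c.op := by
  have hbridge : X.map (isoStd B).hom.op ≫ psiStd hG ψ (rk B)
      = psiComp hG ψ B ≫ G'.map (isoStd B).hom.op := by
    apply pHomExt (fanLim hG (isColimitStdCofan (rk B)))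
    intro i
    rw [Category.assoc, psiStd_fac, Category.assoc, ← Functor.map_comp, ← op_comp,
      ← Category.assoc, ← Functor.map_comp, ← op_comp]
    show X.map ((ee (rk B) i ≫ (isoStd B).hom).op) ≫ ψ
        = psiComp hG ψ B ≫ G'.map ((ee (rk B) i ≫ (isoStd B).hom).op)
    rw [show ee (rk B) i ≫ (isoStd B).hom = bas B i from rfl]
    exact (psiComp_fac hG ψ B i).symm
  have hc : c = (c ≫ (isoStd B).inv) ≫ (isoStd B).hom := by simp
  rw [hc, op_comp, Functor.map_comp, Functor.map_comp, Category.assoc]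
  conv_lhs => rw [hom_from_std1 (c ≫ (isoStd B).inv)]
  rw [E1 hG ψ ha hn hz, ← Category.assoc, ← Category.assoc, hbridge]
  conv_rhs => rw [hom_from_std1 (c ≫ (isoStd B).inv)]

include ha hn hz in
lemma E2 {A B : FreeAbFG} (u : A ⟶ B) :
    X.map u.op ≫ psiComp hG ψ A = psiComp hG ψ B ≫ G'.map u.op := by
  apply pHomExt (fanLim hG (isColimitBasCofan A))
  intro i
  rw [Category.assoc, psiComp_fac, ← Category.assoc, ← Functor.map_comp, ← op_comp,
    Category.assoc, ← Functor.map_comp, ← op_comp]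
  exact star2 hG ψ ha hn hz B (bas A i ≫ u)

lemma psiStd_one : psiStd hG ψ 1 = ψ := by
  have h := psiStd_fac hG ψ 1 0
  rw [ee_one_zero] at h
  simpa using h

include ha hn hz in
lemma sq_std1 (u : std 1 ⟶ std 1) : X.map u.op ≫ ψ = ψ ≫ G'.map u.op := by
  conv_lhs => rw [hom_from_std1 u]
  conv_rhs => rw [hom_from_std1 u]
  rw [E1 hG ψ ha hn hz, psiStd_one]

include ha hn hz in
lemma psiComp_std_one : psiComp hG ψ (std 1) = ψ := by
  apply pHomExt (fanLim hG (isColimitBasCofan (std 1)))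
  intro i
  rw [psiComp_fac]
  exact sq_std1 hG ψ ha hn hz (bas (std 1) i)

/-- the extension of `ψ` to a natural transformation -/
noncomputable def psiNat : X ⟶ G' where
  app A := psiComp hG ψ A.unop
  naturality A B f := by
    have h := E2 hG ψ ha hn hz f.unop
    rw [Quiver.Hom.op_unop] at h
    exact h

lemma psiNat_app_one : (psiNat hG ψ ha hn hz).app (op (std 1)) = ψ :=
  psiComp_std_one hG ψ ha hn hz

end Psi

section Restrict
variable {C : Type u} [Category.{v} C] {X X' G' : FreeAbFGᵒᵖ ⥤ C}
  (hG : PreservesFiniteProducts G')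
  (ψ : X.obj (op (std 1)) ⟶ G'.obj (op (std 1))) (ρ : X' ⟶ X)

lemma psiStd_restrict (m : ℕ) :
    psiStd hG (ρ.app (op (std 1)) ≫ ψ) m = ρ.app (op (std m)) ≫ psiStd hG ψ m := by
  apply pHomExt (fanLim hG (isColimitStdCofan m))
  intro i
  rw [psiStd_fac, Category.assoc, psiStd_fac, ← Category.assoc, ← Category.assoc,
    ρ.naturality ((ee m i).op)]

lemma sqA_restrict (ha : X.map dd.op ≫ ψ = psiStd hG ψ 2 ≫ G'.map dd.op) :
    X'.map dd.op ≫ (ρ.app (op (std 1)) ≫ ψ)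
      = psiStd hG (ρ.app (op (std 1)) ≫ ψ) 2 ≫ G'.map dd.op := by
  rw [psiStd_restrict]
  conv_lhs => rw [← Category.assoc, ρ.naturality dd.op, Category.assoc, ha, ← Category.assoc]

lemma sqN_restrict (hn : X.map negg.op ≫ ψ = ψ ≫ G'.map negg.op) :
    X'.map negg.op ≫ (ρ.app (op (std 1)) ≫ ψ)
      = (ρ.app (op (std 1)) ≫ ψ) ≫ G'.map negg.op := by
  conv_lhs => rw [← Category.assoc, ρ.naturality negg.op, Category.assoc, hn]
  rw [Category.assoc]

lemma sqZ_restrict (hz : X.map zz.op ≫ ψ = psiStd hG ψ 0 ≫ G'.map zz.op) :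
    X'.map zz.op ≫ (ρ.app (op (std 1)) ≫ ψ)
      = psiStd hG (ρ.app (op (std 1)) ≫ ψ) 0 ≫ G'.map zz.op := by
  rw [psiStd_restrict]
  conv_lhs => rw [← Category.assoc, ρ.naturality zz.op, Category.assoc, hz, ← Category.assoc]

include hG in
lemma eval_inj {α β' : X ⟶ G'}
    (h : α.app (op (std 1)) = β'.app (op (std 1))) : α = β' := by
  ext A
  have hA : α.app (op A.unop) = β'.app (op A.unop) := by
    apply pHomExt (fanLim hG (isColimitBasCofan A.unop))
    intro i
    rw [← α.naturality, ← β'.naturality, h]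
  exact hA

end Restrict


theorem cocompact_in_abelian_group_objects
    -- `C` is a complete category
    (C : Type u) [Category.{v} C] [HasLimitsOfSize.{w, w} C]
    -- `G` is an abelian group object of `C`
    (G : AbObj C)
    -- whose underlying object `G(ℤ)` is cocompact in `C`
    (h1 : IsCocompact.{w} (G.obj.obj (op rankOne))) :
    -- then `G` is cocompact as an object of `Ab(C)`
    IsCocompact.{w} G := by
  intro J instJ instCof F instHas
  letI := instJ; letI := instCof; letI := instHas
  have hG : PreservesFiniteProducts G.obj := G.property.some
  set incl := ObjectProperty.ι
    (fun F : FreeAbFGᵒᵖ ⥤ C => Nonempty (PreservesFiniteProducts F)) with hincl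
  -- the pointwise limit preserves finite products
  have hprod : Nonempty (PreservesFiniteProducts (limit (F ⋙ incl))) := by
    refine ⟨⟨fun n => ?_⟩⟩
    have h1' : PreservesLimitsOfShape (Discrete (Fin n)) (F ⋙ incl).flip := by
      apply preservesLimitsOfShape_of_evaluation
      intro j
      have h3 : PreservesLimitsOfShape (Discrete (Fin n)) ((F ⋙ incl).obj j) :=
        (F.obj j).property.some.preserves n
      exact preservesLimitsOfShape_of_natIso (flipCompEvaluation (F ⋙ incl) j).symm
    have h4 : PreservesLimitsOfShape (Discrete (Fin n))
        (lim : (J ⥤ C) ⥤ C) :=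
      (constLimAdj.rightAdjoint_preservesLimits).preservesLimitsOfShape
    have h5 : PreservesLimitsOfShape (Discrete (Fin n)) ((F ⋙ incl).flip ⋙ lim) :=
      inferInstance
    exact preservesLimitsOfShape_of_natIso (limitIsoFlipCompLim (F ⋙ incl)).symm
  haveI : CreatesLimit F incl := createsLimitFullSubcategoryInclusion F hprod
  -- evaluated limit cones
  have hEval : ∀ A : FreeAbFG,
      IsLimit ((incl ⋙ (evaluation FreeAbFGᵒᵖ C).obj (op A)).mapCone (limit.cone F)) := by
    intro A
    exact isLimitOfPreserves _ (limit.isLimit F)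
  -- the two key properties obtained from cocompactness of the underlying object
  have key : ∀ A : FreeAbFG,
      (∀ (φv : (incl.obj (limit F)).obj (op A) ⟶ G.obj.obj (op (std 1))),
        ∃ (j : J) (ψ0 : (incl.obj (F.obj j)).obj (op A) ⟶ G.obj.obj (op (std 1))),
          (incl.map (limit.π F j)).app (op A) ≫ ψ0 = φv)
      ∧ (∀ (j : J) (s₁ s₂ : (incl.obj (F.obj j)).obj (op A) ⟶ G.obj.obj (op (std 1))),
          (incl.map (limit.π F j)).app (op A) ≫ s₁
            = (incl.map (limit.π F j)).app (op A) ≫ s₂ →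
          ∃ (k : J) (h : k ⟶ j),
            (incl.map (F.map h)).app (op A) ≫ s₁ = (incl.map (F.map h)).app (op A) ≫ s₂) := by
    intro A
    obtain ⟨ht⟩ := h1 J instJ instCof (F ⋙ (incl ⋙ (evaluation FreeAbFGᵒᵖ C).obj (op A)))
      inferInstance
    set dg := F ⋙ (incl ⋙ (evaluation FreeAbFGᵒᵖ C).obj (op A)) with hdg
    have hc := hEval A
    set uiso := IsLimit.conePointUniqueUpToIso (limit.isLimit dg) hc with huiso
    have hu : ∀ j : J, uiso.hom ≫ (incl.map (limit.π F j)).app (op A) = limit.π dg j :=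
      fun j => IsLimit.conePointUniqueUpToIso_hom_comp (limit.isLimit dg) hc j
    constructor
    · intro φv
      obtain ⟨jop, x, hx⟩ := jointSurj _ ht (uiso.hom ≫ φv)
      have hx' : limit.π dg jop.unop ≫ x = uiso.hom ≫ φv := hx
      refine ⟨jop.unop, x, ?_⟩
      have hπ : (incl.map (limit.π F jop.unop)).app (op A) = uiso.inv ≫ limit.π dg jop.unop :=
        (Iso.eq_inv_comp uiso).mpr (hu jop.unop)
      rw [hπ]
      refine (Category.assoc _ _ _).trans ?_
      exact (congrArg (uiso.inv ≫ ·) hx').trans (uiso.inv_hom_id_assoc φv)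
    · intro j s₁ s₂ hss
      have hι : (homCocone dg (G.obj.obj (op (std 1)))).ι.app (op j) s₁
          = (homCocone dg (G.obj.obj (op (std 1)))).ι.app (op j) s₂ := by
        show limit.π dg j ≫ s₁ = limit.π dg j ≫ s₂
        rw [← hu j, Category.assoc, Category.assoc, hss]
      obtain ⟨kop, uu, huu⟩ := filteredEq _ ht s₁ s₂ hι
      exact ⟨kop.unop, uu.unop, huu⟩
  -- helper : app of a composite
  have happ : ∀ {P Q R : AbObj C} (a : P ⟶ Q) (b : Q ⟶ R) (B : FreeAbFGᵒᵖ),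
      (incl.map (a ≫ b)).app B = (incl.map a).app B ≫ (incl.map b).app B := by
    intro P Q R a b B
    rw [incl.map_comp]
    rfl
  constructor
  apply isColimitOfFiltered
  -- ===================== surjectivity =====================
  · intro φ
    -- φ is a morphism `limit F ⟶ G` in `AbObj C`
    set φ1 := (incl.map φ).app (op (std 1)) with hφ1
    -- a compatibility lemma: whenever `π₁ ≫ ψ = φ1`, the induced standard components
    -- are compatible with the projections
    have piPsi : ∀ (j : J) (ψ : (incl.obj (F.obj j)).obj (op (std 1)) ⟶ G.obj.obj (op (std 1))),
        (incl.map (limit.π F j)).app (op (std 1)) ≫ ψ = φ1 →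
        ∀ m : ℕ, (incl.map (limit.π F j)).app (op (std m)) ≫ psiStd hG ψ m
          = (incl.map φ).app (op (std m)) := by
      intro j ψ hψ m
      apply pHomExt (fanLim hG (isColimitStdCofan m))
      intro i
      rw [Category.assoc, psiStd_fac, ← Category.assoc,
        ← (incl.map (limit.π F j)).naturality ((ee m i).op), Category.assoc, hψ,
        (incl.map φ).naturality ((ee m i).op)]
      rfl
    -- start: find a first index and morphism
    obtain ⟨j₀, ψ₀, hψ₀⟩ := (key (std 1)).1 φ1
    -- step (a): addition square
    obtain ⟨j₁, h₁, hres₁⟩ := (key (std 2)).2 j₀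
      ((incl.obj (F.obj j₀)).map dd.op ≫ ψ₀) (psiStd hG ψ₀ 2 ≫ G.obj.map dd.op)
      (by
        rw [← Category.assoc, ← (incl.map (limit.π F j₀)).naturality dd.op, Category.assoc,
          hψ₀, ← Category.assoc, piPsi j₀ ψ₀ hψ₀ 2]
        exact (incl.map φ).naturality dd.op)
    set ρ₁ := incl.map (F.map h₁) with hρ₁
    set ψ₁ := ρ₁.app (op (std 1)) ≫ ψ₀ with hψ₁def
    have hππ₁ : incl.map (limit.π F j₁) ≫ ρ₁ = incl.map (limit.π F j₀) := by
      rw [← incl.map_comp, limit.w F h₁]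
    have hψ₁ : (incl.map (limit.π F j₁)).app (op (std 1)) ≫ ψ₁ = φ1 := by
      rw [hψ₁def, ← Category.assoc]
      have : (incl.map (limit.π F j₁)).app (op (std 1)) ≫ ρ₁.app (op (std 1))
          = (incl.map (limit.π F j₀)).app (op (std 1)) := by
        rw [← NatTrans.comp_app, hππ₁]
      rw [this, hψ₀]
    have ha₁ : (incl.obj (F.obj j₁)).map dd.op ≫ ψ₁ = psiStd hG ψ₁ 2 ≫ G.obj.map dd.op := by
      rw [hψ₁def, psiStd_restrict hG ψ₀ ρ₁ 2, ← Category.assoc, ρ₁.naturality dd.op,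
        Category.assoc, hres₁, ← Category.assoc]
    -- step (b): negation square
    obtain ⟨j₂, h₂, hres₂⟩ := (key (std 1)).2 j₁
      ((incl.obj (F.obj j₁)).map negg.op ≫ ψ₁) (ψ₁ ≫ G.obj.map negg.op)
      (by
        rw [← Category.assoc, ← (incl.map (limit.π F j₁)).naturality negg.op, Category.assoc,
          hψ₁, ← Category.assoc, hψ₁]
        exact (incl.map φ).naturality negg.op)
    set ρ₂ := incl.map (F.map h₂) with hρ₂
    set ψ₂ := ρ₂.app (op (std 1)) ≫ ψ₁ with hψ₂def
    have hππ₂ : incl.map (limit.π F j₂) ≫ ρ₂ = incl.map (limit.π F j₁) := by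
      rw [← incl.map_comp, limit.w F h₂]
    have hψ₂ : (incl.map (limit.π F j₂)).app (op (std 1)) ≫ ψ₂ = φ1 := by
      rw [hψ₂def, ← Category.assoc]
      have : (incl.map (limit.π F j₂)).app (op (std 1)) ≫ ρ₂.app (op (std 1))
          = (incl.map (limit.π F j₁)).app (op (std 1)) := by
        rw [← NatTrans.comp_app, hππ₂]
      rw [this, hψ₁]
    have ha₂ : (incl.obj (F.obj j₂)).map dd.op ≫ ψ₂ = psiStd hG ψ₂ 2 ≫ G.obj.map dd.op :=
      sqA_restrict hG ψ₁ ρ₂ ha₁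
    have hn₂ : (incl.obj (F.obj j₂)).map negg.op ≫ ψ₂ = ψ₂ ≫ G.obj.map negg.op := by
      rw [hψ₂def, ← Category.assoc, ρ₂.naturality negg.op, Category.assoc, hres₂,
        ← Category.assoc]
    -- step (c): zero square
    obtain ⟨j₃, h₃, hres₃⟩ := (key (std 0)).2 j₂
      ((incl.obj (F.obj j₂)).map zz.op ≫ ψ₂) (psiStd hG ψ₂ 0 ≫ G.obj.map zz.op)
      (by
        rw [← Category.assoc, ← (incl.map (limit.π F j₂)).naturality zz.op, Category.assoc,
          hψ₂, ← Category.assoc]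
        have h0 : (incl.map (limit.π F j₂)).app (op (std 0)) ≫ psiStd hG ψ₂ 0
            = (incl.map φ).app (op (std 0)) :=
          pHomExt (fanLim hG (isColimitStdCofan 0)) (fun i => i.elim0)
        rw [h0]
        exact (incl.map φ).naturality zz.op)
    set ρ₃ := incl.map (F.map h₃) with hρ₃
    set ψ₃ := ρ₃.app (op (std 1)) ≫ ψ₂ with hψ₃def
    have hππ₃ : incl.map (limit.π F j₃) ≫ ρ₃ = incl.map (limit.π F j₂) := by
      rw [← incl.map_comp, limit.w F h₃]
    have hψ₃ : (incl.map (limit.π F j₃)).app (op (std 1)) ≫ ψ₃ = φ1 := by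
      rw [hψ₃def, ← Category.assoc]
      have : (incl.map (limit.π F j₃)).app (op (std 1)) ≫ ρ₃.app (op (std 1))
          = (incl.map (limit.π F j₂)).app (op (std 1)) := by
        rw [← NatTrans.comp_app, hππ₃]
      rw [this, hψ₂]
    have ha₃ : (incl.obj (F.obj j₃)).map dd.op ≫ ψ₃ = psiStd hG ψ₃ 2 ≫ G.obj.map dd.op :=
      sqA_restrict hG ψ₂ ρ₃ ha₂
    have hn₃ : (incl.obj (F.obj j₃)).map negg.op ≫ ψ₃ = ψ₃ ≫ G.obj.map negg.op :=
      sqN_restrict ψ₂ ρ₃ hn₂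
    have hz₃ : (incl.obj (F.obj j₃)).map zz.op ≫ ψ₃ = psiStd hG ψ₃ 0 ≫ G.obj.map zz.op := by
      rw [hψ₃def, psiStd_restrict hG ψ₂ ρ₃ 0, ← Category.assoc, ρ₃.naturality zz.op,
        Category.assoc, hres₃, ← Category.assoc]
    -- the extension
    set χ := psiNat hG ψ₃ ha₃ hn₃ hz₃ with hχ
    have hχ1 : χ.app (op (std 1)) = ψ₃ := psiNat_app_one hG ψ₃ ha₃ hn₃ hz₃
    let χAb : F.obj j₃ ⟶ G := ObjectProperty.homMk χ
    refine ⟨op j₃, χAb, ?_⟩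
    show limit.π F j₃ ≫ χAb = φ
    apply incl.map_injective
    apply eval_inj hG
    rw [happ]
    show (incl.map (limit.π F j₃)).app (op (std 1)) ≫ χ.app (op (std 1)) = φ1
    rw [hχ1, hψ₃]
  -- ===================== injectivity =====================
  · intro jop jop' χ χ' hιχ
    obtain ⟨k, f0, g0, -⟩ := IsCofilteredOrEmpty.cone_objs jop.unop jop'.unop
    have hπk : limit.π F k ≫ (F.map f0 ≫ χ) = limit.π F k ≫ (F.map g0 ≫ χ') := by
      rw [← Category.assoc, ← Category.assoc, limit.w F f0, limit.w F g0]
      exact hιχ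
    have hπk1 : (incl.map (limit.π F k)).app (op (std 1))
          ≫ (incl.map (F.map f0 ≫ χ)).app (op (std 1))
        = (incl.map (limit.π F k)).app (op (std 1))
          ≫ (incl.map (F.map g0 ≫ χ')).app (op (std 1)) := by
      rw [← happ, ← happ, hπk]
    obtain ⟨l, hl, hres⟩ := (key (std 1)).2 k
      ((incl.map (F.map f0 ≫ χ)).app (op (std 1)))
      ((incl.map (F.map g0 ≫ χ')).app (op (std 1))) hπk1
    refine ⟨op l, (hl ≫ f0).op, (hl ≫ g0).op, ?_⟩
    show F.map (hl ≫ f0) ≫ χ = F.map (hl ≫ g0) ≫ χ'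
    apply incl.map_injective
    apply eval_inj hG
    rw [F.map_comp, Category.assoc, F.map_comp, Category.assoc, happ, happ]
    exact hres
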